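/- Let (K,D,⋆) be a complete probabilistic metric space with ⋆ continuous and sup-continuous. If (K,D,⋆) is compact, then the space Lip¹_⋆(K,Δ⁺) of probabilistic 1-Lipschitz maps is a compact subset of (C_⋆(K,Δ⁺), d_∞), where d_∞(f,g) = sup_{x∈K} d_L(f(x),g(x)): every sequence of probabilistic 1-Lipschitz maps has a subsequence converging uniformly (in d_∞) to a probabilistic 1-Lipschitz map. -/

import Mathlib

open Filter Topology

noncomputable section

/-- `Δ⁺`: distribution functions `F : [-∞,∞] → [0,1]`, nondecreasing, left-continuous
on `ℝ`, with `F(-∞)=0`, `F(+∞)=1` and `F(0)=0`. -/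
def IsDistFun (F : EReal → ℝ) : Prop :=
  Monotone F ∧ (∀ t, F t ∈ Set.Icc (0:ℝ) 1) ∧
  (∀ x : ℝ, ContinuousWithinAt F (Set.Iio (x : EReal)) (x : EReal)) ∧
  F ⊥ = 0 ∧ F ⊤ = 1 ∧ F (0 : EReal) = 0

/-- The step function `H_a`. -/
def Hstep (a : ℝ) : EReal → ℝ := fun t => if t ≤ (a : EReal) then 0 else 1

/-- `H₀`. -/
def H0 : EReal → ℝ := Hstep 0

/-- `H_∞`. -/
def Hinf : EReal → ℝ := fun t => if t = ⊤ then 1 else 0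

/-- The condition `A(F,G;h)` : for all `t ∈ (0,1/h)`, `G(t) ≤ F(t+h)+h`. -/
def levyCond (F G : EReal → ℝ) (h : ℝ) : Prop :=
  ∀ t : ℝ, 0 < t → t < 1 / h → G (t : EReal) ≤ F ((t + h : ℝ) : EReal) + h

def levySet (F G : EReal → ℝ) : Set ℝ :=
  {h : ℝ | 0 < h ∧ h ≤ 1 ∧ levyCond F G h ∧ levyCond G F h}

/-- The modified Lévy distance. -/
def dL (F G : EReal → ℝ) : ℝ := sInf (levySet F G)

/-- Weak convergence: pointwise convergence at each (real) continuity point of the limit. -/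
def WeakConv (F : ℕ → EReal → ℝ) (G : EReal → ℝ) : Prop :=
  ∀ t : ℝ, ContinuousAt G (t : EReal) →
    Tendsto (fun n => F n (t : EReal)) atTop (𝓝 (G (t : EReal)))

abbrev TriOp := (EReal → ℝ) → (EReal → ℝ) → (EReal → ℝ)

/-- A triangle function on `Δ⁺`. -/
def IsTriangleFn (star : TriOp) : Prop :=
  (∀ F L, IsDistFun F → IsDistFun L → IsDistFun (star F L)) ∧
  (∀ F L, IsDistFun F → IsDistFun L → star F L = star L F) ∧
  (∀ F L K, IsDistFun F → IsDistFun L → IsDistFun K →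
    star F (star L K) = star (star F L) K) ∧
  (∀ F, IsDistFun F → star F H0 = F) ∧
  (∀ F L K, IsDistFun F → IsDistFun L → IsDistFun K → F ≤ L → star F K ≤ star L K)

/-- `⋆` is continuous with respect to weak convergence. -/
def StarContinuous (star : TriOp) : Prop :=
  ∀ (Fn Ln : ℕ → EReal → ℝ) (F L : EReal → ℝ),
    (∀ n, IsDistFun (Fn n)) → (∀ n, IsDistFun (Ln n)) →
    IsDistFun F → IsDistFun L →
    WeakConv Fn F → WeakConv Ln L →
    WeakConv (fun n => star (Fn n) (Ln n)) (star F L)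

/-- `⋆` is sup-continuous. -/
def StarSupContinuous (star : TriOp) : Prop :=
  ∀ (I : Type) (_ : Nonempty I) (F : I → EReal → ℝ) (L : EReal → ℝ),
    (∀ i, IsDistFun (F i)) → IsDistFun L →
    (fun t => ⨆ i, star (F i) L t) = star (fun t => ⨆ i, F i t) L

/-- A probabilistic metric space `(G, D, ⋆)`. -/
structure PMSpace (G : Type) where
  star : TriOp
  D : G → G → EReal → ℝ
  star_tri : IsTriangleFn star
  D_mem : ∀ p q, IsDistFun (D p q)
  D_eq_iff : ∀ p q, D p q = H0 ↔ p = q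
  D_symm : ∀ p q, D p q = D q p
  D_tri : ∀ p q r, star (D p q) (D q r) ≤ D p r

/-- Probabilistic 1-Lipschitz map. -/
def PLip {G : Type} (M : PMSpace G) (f : G → EReal → ℝ) : Prop :=
  (∀ x, IsDistFun (f x)) ∧ ∀ x y, M.star (M.D x y) (f y) ≤ f x

/-- Probabilistically continuous map. -/
def PCont {G : Type} (M : PMSpace G) (f : G → EReal → ℝ) : Prop :=
  (∀ x, IsDistFun (f x)) ∧
  ∀ (z : G) (zn : ℕ → G),
    WeakConv (fun n => M.D (zn n) z) H0 →
    WeakConv (fun n => f (zn n)) (f z)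

/-- The uniform modified Lévy distance `d_∞`. -/
def dInf {G : Type} (f g : G → EReal → ℝ) : ℝ := ⨆ x, dL (f x) (g x)

/-- Probabilistic Cauchy sequence: `D(z_n,z_p)(t) → H₀(t)` for all real `t`. -/
def PCauchy {G : Type} (M : PMSpace G) (z : ℕ → G) : Prop :=
  ∀ t : ℝ, Tendsto (fun np : ℕ × ℕ => M.D (z np.1) (z np.2) (t : EReal))
    atTop (𝓝 (H0 (t : EReal)))

def PConvTo {G : Type} (M : PMSpace G) (z : ℕ → G) (w : G) : Prop :=
  ∀ t : ℝ, Tendsto (fun n => M.D (z n) w (t : EReal)) atTop (𝓝 (H0 (t : EReal)))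

def PComplete {G : Type} (M : PMSpace G) : Prop :=
  ∀ z : ℕ → G, PCauchy M z → ∃ w, PConvTo M z w

/-- Compactness: complete and every strong `t`-neighborhood cover has a finite subcover. -/
def PCompact {G : Type} (M : PMSpace G) : Prop :=
  PComplete M ∧ ∀ t : ℝ, 0 < t → ∃ A : Finset G, ∀ x : G, ∃ a ∈ A, M.D a x (t : EReal) > 1 - t
section Aux

variable {F G H : EReal → ℝ}

lemma df_mono (hF : IsDistFun F) : Monotone F := hF.1
lemma df_nonneg (hF : IsDistFun F) (t : EReal) : 0 ≤ F t := (hF.2.1 t).1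
lemma df_le_one (hF : IsDistFun F) (t : EReal) : F t ≤ 1 := (hF.2.1 t).2
lemma df_zero (hF : IsDistFun F) {t : EReal} (ht : t ≤ 0) : F t = 0 :=
  le_antisymm (by simpa [hF.2.2.2.2.2] using hF.1 (le_trans ht (le_of_eq (EReal.coe_zero.symm))))
    (df_nonneg hF t)

lemma isDistFun_H0 : IsDistFun H0 := by
  have hmono : Monotone H0 := by
    intro a b hab
    simp only [H0, Hstep]
    by_cases hb : b ≤ ((0:ℝ):EReal)
    · rw [if_pos (hab.trans hb), if_pos hb]
    · rw [if_neg hb]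
      split_ifs <;> norm_num
  refine ⟨hmono, ?_, ?_, ?_, ?_, ?_⟩
  · intro t; simp only [H0, Hstep]; split_ifs <;> norm_num
  · intro x
    rcases le_or_gt (x : EReal) ((0:ℝ):EReal) with hx | hx
    · have : ∀ y ∈ Set.Iio (x:EReal), H0 y = H0 x := by
        intro y hy
        simp only [H0, Hstep, if_pos (le_of_lt (lt_of_lt_of_le hy hx)), if_pos hx]
      refine (continuousWithinAt_const (b := H0 x)).congr this ?_ |>.mono (by simp)
      simp
    · have hmem : Set.Ioo ((0:ℝ):EReal) (x:EReal) ∈ 𝓝[<] (x:EReal) :=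
        Ioo_mem_nhdsLT_of_mem ⟨hx, le_rfl⟩
      have hx' : H0 x = 1 := by simp only [H0, Hstep, if_neg (not_le.2 hx)]
      unfold ContinuousWithinAt
      rw [hx']
      refine Tendsto.congr' ?_ tendsto_const_nhds
      filter_upwards [hmem] with y hy
      simp only [H0, Hstep, if_neg (not_le.2 hy.1)]
  · simp only [H0, Hstep]; rw [if_pos]; exact bot_le
  · simp only [H0, Hstep]; rw [if_neg]; simp
  · simp only [H0, Hstep]; rw [if_pos]; simp

lemma levyCond_one (hF : IsDistFun F) (hG : IsDistFun G) : levyCond F G 1 := by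
  intro t ht ht1
  have := df_le_one hG (t : EReal)
  have := df_nonneg hF ((t+1 : ℝ) : EReal)
  linarith

lemma one_mem_levySet (hF : IsDistFun F) (hG : IsDistFun G) : (1:ℝ) ∈ levySet F G :=
  ⟨one_pos, le_rfl, levyCond_one hF hG, levyCond_one hG hF⟩

lemma levySet_bddBelow : BddBelow (levySet F G) := ⟨0, fun _ h => h.1.le⟩

lemma dL_nonneg : 0 ≤ dL F G :=
  Real.sInf_nonneg (fun _ h => h.1.le)

lemma dL_le_of_mem {h : ℝ} (hm : h ∈ levySet F G) : dL F G ≤ h :=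
  csInf_le levySet_bddBelow hm

lemma dL_le_one (hF : IsDistFun F) (hG : IsDistFun G) : dL F G ≤ 1 :=
  dL_le_of_mem (one_mem_levySet hF hG)

lemma levyCond_mono (hF : IsDistFun F) {h h' : ℝ} (hc : levyCond F G h)
    (h0 : 0 < h) (hh : h ≤ h') : levyCond F G h' := by
  intro t ht ht1
  have h0' : 0 < h' := lt_of_lt_of_le h0 hh
  have ht1' : t < 1 / h := lt_of_lt_of_le ht1 (one_div_le_one_div_of_le h0 hh)
  calc G (t:EReal) ≤ F ((t+h : ℝ):EReal) + h := hc t ht ht1'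
    _ ≤ F ((t+h' : ℝ):EReal) + h' := by
        have : ((t+h : ℝ):EReal) ≤ ((t+h' : ℝ):EReal) := by
          exact_mod_cast EReal.coe_le_coe_iff.2 (by linarith)
        exact add_le_add (hF.1 this) hh

lemma mem_levySet_of_lt (hF : IsDistFun F) (hG : IsDistFun G) {h : ℝ}
    (hlt : dL F G < h) (hle : h ≤ 1) : h ∈ levySet F G := by
  obtain ⟨h₀, hm, hlt'⟩ := exists_lt_of_csInf_lt ⟨1, one_mem_levySet hF hG⟩ hlt
  exact ⟨lt_of_le_of_lt dL_nonneg hlt, hle,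
    levyCond_mono hF hm.2.2.1 hm.1 hlt'.le, levyCond_mono hG hm.2.2.2 hm.1 hlt'.le⟩

lemma levySet_symm : levySet F G = levySet G F := by
  ext h; exact ⟨fun ⟨a,b,c,d⟩ => ⟨a,b,d,c⟩, fun ⟨a,b,c,d⟩ => ⟨a,b,d,c⟩⟩

lemma dL_symm : dL F G = dL G F := by unfold dL; rw [levySet_symm]

lemma dL_le_of_forall_mem (hF : IsDistFun F) (hG : IsDistFun G) {ε : ℝ} (hε : 0 ≤ ε)
    (h : ∀ ε', ε < ε' → ε' ≤ 1 → ε' ∈ levySet F G) : dL F G ≤ ε := by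
  rcases le_or_gt 1 ε with h1 | h1
  · exact (dL_le_one hF hG).trans h1
  by_contra hcon
  push_neg at hcon
  have hεlt : ε < min ((ε + dL F G)/2) 1 := lt_min (by linarith) h1
  have h2 := dL_le_of_mem (h _ hεlt (min_le_right _ _))
  have h3 : dL F G ≤ (ε + dL F G)/2 := h2.trans (min_le_left _ _)
  linarith

lemma dL_triangle (hF : IsDistFun F) (hG : IsDistFun G) (hH : IsDistFun H) :
    dL F G ≤ dL F H + dL H G := by
  have hFH := dL_nonneg (F := F) (G := H)
  have hHG := dL_nonneg (F := H) (G := G)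
  refine dL_le_of_forall_mem hF hG (by linarith) ?_
  intro ε' hlt hle
  -- write ε' = h + k with h > dL F H, k > dL H G, h + k = ε'
  set δ := (ε' - dL F H - dL H G)/2 with hδ
  have hδpos : 0 < δ := by simp only [hδ]; linarith
  set h := dL F H + δ with hh
  set k := dL H G + δ with hk
  have hhk : h + k = ε' := by simp only [hh, hk, hδ]; ring
  have hmemFH : h ∈ levySet F H := mem_levySet_of_lt hF hH (by linarith) (by linarith)
  have hmemHG : k ∈ levySet H G := mem_levySet_of_lt hH hG (by linarith) (by linarith)
  have h0 : 0 < h := hmemFH.1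
  have k0 : 0 < k := hmemHG.1
  have comp : ∀ (a b : ℝ), 0 < a → 0 < b → a + b ≤ 1 →
      ∀ (A B C : EReal → ℝ), Monotone A → levyCond A B a → levyCond B C b →
      levyCond A C (a+b) := by
    intro a b a0 b0 hab A B C hA hAB hBC t ht htlt
    have ht2 : t < 1 / b := by
      calc t < 1/(a+b) := htlt
        _ ≤ 1/b := one_div_le_one_div_of_le b0 (by linarith)
    have key : a*(a+b) ≤ 1 := mul_le_one₀ (by linarith) (by linarith) (by linarith)
    have e1 : 1/(a+b) + b ≤ 1/a := by
      rw [← sub_nonneg]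
      have heq : 1/a - (1/(a+b)+b) = b*(1 - a*(a+b))/(a*(a+b)) := by
        field_simp
        ring
      rw [heq]
      apply div_nonneg (by nlinarith) (by positivity)
    have ht3 : t + b < 1 / a := by linarith
    calc C (t:EReal) ≤ B ((t+b:ℝ):EReal) + b := hBC t ht ht2
      _ ≤ (A (((t+b)+a:ℝ):EReal) + a) + b := by
          have := hAB (t+b) (by linarith) ht3
          linarith
      _ = A ((t+(a+b):ℝ):EReal) + (a+b) := by ring_nf
  have hks : h + k ≤ 1 := hhk ▸ hle
  refine ⟨by linarith, hhk ▸ hle, ?_, ?_⟩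
  · exact hhk ▸ comp h k h0 k0 hks F H G hF.1 hmemFH.2.2.1 hmemHG.2.2.1
  · have : levyCond G F (k+h) := comp k h k0 h0 (by linarith) G H F hG.1 hmemHG.2.2.2 hmemFH.2.2.2
    rw [add_comm] at this
    exact hhk ▸ this

end Aux
section Aux2

/-- left-continuous regularization of a rational family. -/
def regFun (u : ℚ → ℝ) : EReal → ℝ := fun t =>
  if t = ⊤ then 1 else sSup (insert (0:ℝ) ((fun q : ℚ => u q) '' {q | ((q:ℝ):EReal) < t}))

lemma regFun_main (Fs : ℕ → EReal → ℝ) (hFs : ∀ n, IsDistFun (Fs n))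
    (u : ℚ → ℝ) (hconv : ∀ q : ℚ, Tendsto (fun n => Fs n ((q:ℝ):EReal)) atTop (𝓝 (u q))) :
    IsDistFun (regFun u) ∧ WeakConv Fs (regFun u) := by
  have hu0 : ∀ q : ℚ, 0 ≤ u q := fun q =>
    ge_of_tendsto (hconv q) (Eventually.of_forall fun n => df_nonneg (hFs n) _)
  have hu1 : ∀ q : ℚ, u q ≤ 1 := fun q =>
    le_of_tendsto (hconv q) (Eventually.of_forall fun n => df_le_one (hFs n) _)
  have huz : ∀ q : ℚ, (q:ℝ) ≤ 0 → u q = 0 := by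
    intro q hq
    refine tendsto_nhds_unique (hconv q) ?_
    have : ∀ n, Fs n ((q:ℝ):EReal) = 0 := fun n => df_zero (hFs n) (EReal.coe_nonpos.2 hq)
    simpa [this] using tendsto_const_nhds
  set A : EReal → Set ℝ := fun t => insert (0:ℝ) ((fun q : ℚ => u q) '' {q | ((q:ℝ):EReal) < t})
    with hA
  have hne : ∀ t, (A t).Nonempty := fun t => ⟨0, Set.mem_insert _ _⟩
  have hbdd : ∀ t, BddAbove (A t) := by
    intro t
    refine ⟨1, ?_⟩
    rintro x (rfl | ⟨q, _, rfl⟩)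
    · norm_num
    · exact hu1 q
  have hreg : ∀ t : EReal, t ≠ ⊤ → regFun u t = sSup (A t) := by
    intro t ht; simp only [regFun, if_neg ht, hA]
  have hle1 : ∀ t, regFun u t ≤ 1 := by
    intro t
    by_cases ht : t = ⊤
    · simp [regFun, ht]
    · rw [hreg t ht]
      refine csSup_le (hne t) ?_
      rintro x (rfl | ⟨q, _, rfl⟩)
      · norm_num
      · exact hu1 q
  have h0le : ∀ t, 0 ≤ regFun u t := by
    intro t
    by_cases ht : t = ⊤
    · simp [regFun, ht]
    · rw [hreg t ht]; exact le_csSup (hbdd t) (Set.mem_insert _ _)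
  have hmono : Monotone (regFun u) := by
    intro s t hst
    by_cases ht : t = ⊤
    · rw [ht]; simp only [regFun, if_pos rfl]; exact hle1 s
    · have hs : s ≠ ⊤ := fun h => ht (top_le_iff.1 (h ▸ hst))
      rw [hreg s hs, hreg t ht]
      refine csSup_le_csSup (hbdd t) (hne s) ?_
      rintro x (rfl | ⟨q, hq, rfl⟩)
      · exact Set.mem_insert _ _
      · exact Set.mem_insert_of_mem _ ⟨q, lt_of_lt_of_le hq hst, rfl⟩
  have hmem : ∀ q : ℚ, ∀ t : EReal, ((q:ℝ):EReal) < t → t ≠ ⊤ → u q ≤ regFun u t := by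
    intro q t hq ht
    rw [hreg t ht]
    exact le_csSup (hbdd t) (Set.mem_insert_of_mem _ ⟨q, hq, rfl⟩)
  constructor
  · refine ⟨hmono, fun t => ⟨h0le t, hle1 t⟩, ?_, ?_, ?_, ?_⟩
    · -- left continuity
      intro x
      have hx : (x:EReal) ≠ ⊤ := EReal.coe_ne_top x
      unfold ContinuousWithinAt
      rw [Metric.tendsto_nhds]
      intro ε hε
      have hlt : regFun u x - ε < sSup (A x) := by rw [← hreg x hx]; linarith
      obtain ⟨a, ha, hagt⟩ := exists_lt_of_lt_csSup (hne x) hlt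
      rcases ha with rfl | ⟨q, hq, rfl⟩
      · filter_upwards [self_mem_nhdsWithin] with y hy
        have h1 : regFun u y ≤ regFun u x := hmono (le_of_lt hy)
        have h2 : 0 ≤ regFun u y := h0le y
        rw [Real.dist_eq, abs_sub_lt_iff]
        constructor <;> linarith
      · filter_upwards [Ioo_mem_nhdsLT_of_mem (Set.mem_Ioc.2 ⟨hq, le_rfl⟩)] with y hy
        have h1 : regFun u y ≤ regFun u x := hmono (le_of_lt hy.2)
        have h2 : u q ≤ regFun u y := hmem q y hy.1 (ne_top_of_lt (hy.2.trans (EReal.coe_lt_top x)))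
        rw [Real.dist_eq, abs_sub_lt_iff]
        constructor <;> linarith
    · -- ⊥
      rw [hreg ⊥ bot_ne_top]
      have : A ⊥ = {0} := by
        simp only [hA]
        have : {q : ℚ | ((q:ℝ):EReal) < ⊥} = ∅ := by
          ext q; simp [not_lt_bot]
        rw [this]
        simp
      rw [this, csSup_singleton]
    · simp [regFun]
    · -- value at 0
      rw [hreg 0 (by simp)]
      refine le_antisymm (csSup_le (hne 0) ?_) (le_csSup (hbdd 0) (Set.mem_insert _ _))
      rintro x (rfl | ⟨q, hq, rfl⟩)
      · exact le_rfl
      · have : ((q:ℝ):EReal) < ((0:ℝ):EReal) := by simpa using hq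
        exact le_of_eq (huz q (le_of_lt (EReal.coe_lt_coe_iff.1 this)))
  · -- weak convergence
    intro t hcont
    rw [Metric.tendsto_nhds]
    intro ε hε
    have hx : (t:EReal) ≠ ⊤ := EReal.coe_ne_top t
    -- upper bound: find rational q' > t with u q' < regFun u t + ε
    have hcont' : ContinuousAt (fun s : ℝ => regFun u (s:EReal)) t := by
      have := EReal.isOpenEmbedding_coe.continuousAt_iff (g := regFun u) (x := t)
      exact this.2 hcont
    obtain ⟨δ, hδ, hδprop⟩ := Metric.continuousAt_iff.1 hcont' ε hε
    obtain ⟨q', hq'1, hq'2⟩ := exists_rat_btwn (show t < t + δ/2 by linarith)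
    have hsdist : dist (t + δ/2) t < δ := by
      rw [Real.dist_eq]; rw [abs_of_pos (by linarith)]; linarith
    have hupper : u q' < regFun u t + ε := by
      have h1 : u q' ≤ regFun u ((t + δ/2 : ℝ):EReal) :=
        hmem q' _ (EReal.coe_lt_coe_iff.2 hq'2) (EReal.coe_ne_top _)
      have h2 := hδprop hsdist
      rw [Real.dist_eq, abs_sub_lt_iff] at h2
      have := h2.1
      linarith
    have hev1 : ∀ᶠ n in atTop, Fs n ((t:ℝ):EReal) < regFun u t + ε := by
      filter_upwards [(hconv q').eventually_lt_const hupper] with n hn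
      exact lt_of_le_of_lt (df_mono (hFs n) (EReal.coe_le_coe_iff.2 (le_of_lt hq'1))) hn
    -- lower bound
    have hlt : regFun u t - ε < sSup (A t) := by rw [← hreg t hx]; linarith
    obtain ⟨a, ha, hagt⟩ := exists_lt_of_lt_csSup (hne t) hlt
    have hev2 : ∀ᶠ n in atTop, regFun u t - ε < Fs n ((t:ℝ):EReal) := by
      rcases ha with rfl | ⟨q, hq, rfl⟩
      · exact Eventually.of_forall fun n => lt_of_lt_of_le hagt (df_nonneg (hFs n) _)
      · filter_upwards [(hconv q).eventually_const_lt hagt] with n hn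
        exact lt_of_lt_of_le hn (df_mono (hFs n) (le_of_lt hq))
    filter_upwards [hev1, hev2] with n h1 h2
    rw [Real.dist_eq, abs_sub_lt_iff]
    constructor <;> linarith

lemma helly_family {ι : Type} [Countable ι] (Fs : ℕ → ι → EReal → ℝ)
    (hFs : ∀ n i, IsDistFun (Fs n i)) :
    ∃ (φ : ℕ → ℕ) (G : ι → EReal → ℝ), StrictMono φ ∧ (∀ i, IsDistFun (G i)) ∧
      ∀ i, WeakConv (fun n => Fs (φ n) i) (G i) := by
  set X := ι × ℚ → Set.Icc (0:ℝ) 1 with hX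
  set Φ : ℕ → X := fun n p => ⟨Fs n p.1 ((p.2:ℝ):EReal),
    ⟨df_nonneg (hFs n p.1) _, df_le_one (hFs n p.1) _⟩⟩ with hΦ
  obtain ⟨a, -, φ, hφ, hconv⟩ := isCompact_univ.tendsto_subseq (x := Φ)
    (fun n => Set.mem_univ _)
  refine ⟨φ, fun i => regFun (fun q => (a (i, q) : ℝ)), hφ, ?_⟩
  have key : ∀ i, IsDistFun (regFun (fun q => (a (i, q) : ℝ))) ∧
      WeakConv (fun n => Fs (φ n) i) (regFun (fun q => (a (i, q) : ℝ))) := by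
    intro i
    refine regFun_main _ (fun n => hFs (φ n) i) _ ?_
    intro q
    have h1 : Tendsto (fun n => Φ (φ n) (i, q)) atTop (𝓝 (a (i, q))) :=
      (tendsto_pi_nhds.1 hconv) (i, q)
    have h2 : Tendsto (fun n => ((Φ (φ n) (i, q) : Set.Icc (0:ℝ) 1) : ℝ)) atTop
        (𝓝 ((a (i, q) : ℝ))) := (continuous_subtype_val.tendsto _).comp h1
    exact h2
  exact ⟨fun i => (key i).1, fun i => (key i).2⟩

lemma helly (Fs : ℕ → EReal → ℝ) (hFs : ∀ n, IsDistFun (Fs n)) :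
    ∃ (φ : ℕ → ℕ) (G : EReal → ℝ), StrictMono φ ∧ IsDistFun G ∧
      WeakConv (fun n => Fs (φ n)) G := by
  obtain ⟨φ, G, hφ, hG, hw⟩ := helly_family (ι := Unit) (fun n _ => Fs n) (fun n _ => hFs n)
  exact ⟨φ, G (), hφ, hG (), hw ()⟩

lemma exists_continuousAt_btwn {F : EReal → ℝ} (hF : Monotone F) {a b : ℝ} (hab : a < b) :
    ∃ c : ℝ, a < c ∧ c < b ∧ ContinuousAt F ((c:ℝ):EReal) := by
  have hcnt : {x : EReal | ¬ContinuousAt F x}.Countable := hF.countable_not_continuousAt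
  have h2 : {x : ℝ | ¬ContinuousAt F ((x:ℝ):EReal)}.Countable :=
    (hcnt.preimage EReal.coe_injective)
  by_contra h
  push_neg at h
  have hsub : Set.Ioo a b ⊆ {x : ℝ | ¬ContinuousAt F ((x:ℝ):EReal)} :=
    fun c hc => h c hc.1 hc.2
  have hcnt2 : (Set.Ioo a b).Countable := h2.mono hsub
  have hz := hcnt2.measure_zero MeasureTheory.volume
  rw [Real.volume_Ioo] at hz
  rw [ENNReal.ofReal_eq_zero] at hz
  linarith

end Aux2
section Aux3

lemma weakConv_dL_le {Fs : ℕ → EReal → ℝ} {G : EReal → ℝ}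
    (hFs : ∀ n, IsDistFun (Fs n)) (hG : IsDistFun G) (hw : WeakConv Fs G)
    {ε : ℝ} (hε : 0 < ε) (hε1 : ε ≤ 1) :
    ∀ᶠ n in atTop, dL (Fs n) G ≤ ε := by
  set δ := ε/2 with hδdef
  have hδ : 0 < δ := by positivity
  set N := ⌈(1/ε)/δ⌉₊ with hN
  choose c hc1 hc2 hc3 using fun j : ℕ =>
    exists_continuousAt_btwn hG.1 (show (j:ℝ)*δ < (j:ℝ)*δ + δ by linarith)
  have hev : ∀ᶠ n in atTop, ∀ j ∈ Finset.range (N+1),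
      |Fs n ((c j : ℝ):EReal) - G ((c j : ℝ):EReal)| < δ := by
    rw [eventually_all_finset]
    intro j _
    have h1 := hw (c j) (hc3 j)
    rw [Metric.tendsto_nhds] at h1
    simpa [Real.dist_eq] using h1 δ hδ
  filter_upwards [hev] with n hn
  have hgrid : ∀ t : ℝ, 0 < t → t < 1/ε →
      ∃ j ∈ Finset.range (N+1), t ≤ c j ∧ c j ≤ t + ε := by
    intro t ht htε
    have hj1 : t ≤ (⌈t/δ⌉₊ : ℝ) * δ := by
      rw [← div_le_iff₀ hδ]
      exact Nat.le_ceil _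
    have hj2 : (⌈t/δ⌉₊ : ℝ) * δ < t + δ := by
      have h2 := Nat.ceil_lt_add_one (div_nonneg ht.le hδ.le)
      have h3 : (⌈t/δ⌉₊ : ℝ) * δ < (t/δ + 1) * δ := by
        exact mul_lt_mul_of_pos_right h2 hδ
      rw [add_mul, div_mul_cancel₀ _ (ne_of_gt hδ)] at h3
      linarith
    refine ⟨⌈t/δ⌉₊, ?_, ?_, ?_⟩
    · rw [Finset.mem_range]
      have h4 : ⌈t/δ⌉₊ ≤ N := Nat.ceil_le_ceil ((div_le_div_iff_of_pos_right hδ).2 htε.le)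
      omega
    · exact hj1.trans (hc1 _).le
    · have := hc2 ⌈t/δ⌉₊
      simp only [hδdef] at hj2 this ⊢
      linarith
  refine dL_le_of_mem ⟨hε, hε1, ?_, ?_⟩
  · intro t ht htε
    obtain ⟨j, hj, hcj1, hcj2⟩ := hgrid t ht htε
    have habs := abs_sub_lt_iff.1 (hn j hj)
    have h1 : G (t:EReal) ≤ G ((c j : ℝ):EReal) := hG.1 (EReal.coe_le_coe_iff.2 hcj1)
    have h2 : Fs n ((c j : ℝ):EReal) ≤ Fs n ((t+ε : ℝ):EReal) :=
      (hFs n).1 (EReal.coe_le_coe_iff.2 hcj2)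
    simp only [hδdef] at habs
    linarith [habs.2]
  · intro t ht htε
    obtain ⟨j, hj, hcj1, hcj2⟩ := hgrid t ht htε
    have habs := abs_sub_lt_iff.1 (hn j hj)
    have h1 : Fs n (t:EReal) ≤ Fs n ((c j : ℝ):EReal) := (hFs n).1 (EReal.coe_le_coe_iff.2 hcj1)
    have h2 : G ((c j : ℝ):EReal) ≤ G ((t+ε : ℝ):EReal) := hG.1 (EReal.coe_le_coe_iff.2 hcj2)
    simp only [hδdef] at habs
    linarith [habs.1]

lemma weakConv_dL_tendsto {Fs : ℕ → EReal → ℝ} {G : EReal → ℝ}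
    (hFs : ∀ n, IsDistFun (Fs n)) (hG : IsDistFun G) (hw : WeakConv Fs G) :
    Tendsto (fun n => dL (Fs n) G) atTop (𝓝 0) := by
  rw [Metric.tendsto_nhds]
  intro ε hε
  have h1 : (0:ℝ) < min (ε/2) 1 := lt_min (by linarith) one_pos
  filter_upwards [weakConv_dL_le hFs hG hw h1 (min_le_right _ _)] with n hn
  rw [Real.dist_eq, sub_zero, abs_of_nonneg dL_nonneg]
  calc dL (Fs n) G ≤ min (ε/2) 1 := hn
    _ ≤ ε/2 := min_le_left _ _
    _ < ε := by linarith

lemma dL_tendsto_weakConv {Fs : ℕ → EReal → ℝ} {G : EReal → ℝ}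
    (hFs : ∀ n, IsDistFun (Fs n)) (hG : IsDistFun G)
    (hd : Tendsto (fun n => dL (Fs n) G) atTop (𝓝 0)) : WeakConv Fs G := by
  intro t hcont
  rcases le_or_gt t 0 with ht | ht
  · have h1 : ∀ n, Fs n (t:EReal) = 0 := fun n => df_zero (hFs n) (EReal.coe_nonpos.2 ht)
    have h2 : G (t:EReal) = 0 := df_zero hG (EReal.coe_nonpos.2 ht)
    simp only [h1, h2]
    exact tendsto_const_nhds
  · rw [Metric.tendsto_nhds]
    intro ε hε
    have hcont' : ContinuousAt (fun s : ℝ => G (s:EReal)) t :=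
      (EReal.isOpenEmbedding_coe.continuousAt_iff (g := G) (x := t)).2 hcont
    obtain ⟨δ0, hδ0, hδprop⟩ := Metric.continuousAt_iff.1 hcont' (ε/4) (by linarith)
    set h := min (ε/4) (min (δ0/2) (min (t/2) (min (1/(2*t)) 1))) with hh
    have hpos : 0 < h := by
      refine lt_min (by linarith) (lt_min (by linarith) (lt_min (by linarith)
        (lt_min (by positivity) one_pos)))
    have hεb : h ≤ ε/4 := min_le_left _ _
    have hδb : h ≤ δ0/2 := (min_le_right _ _).trans (min_le_left _ _)
    have htb : h ≤ t/2 := (min_le_right _ _).trans ((min_le_right _ _).trans (min_le_left _ _))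
    have hib : h ≤ 1/(2*t) := (min_le_right _ _).trans ((min_le_right _ _).trans
      ((min_le_right _ _).trans (min_le_left _ _)))
    have h1b : h ≤ 1 := (min_le_right _ _).trans ((min_le_right _ _).trans
      ((min_le_right _ _).trans (min_le_right _ _)))
    have ht1 : t < 1/h := by
      have : h * t ≤ 1/2 := by
        calc h * t ≤ (1/(2*t)) * t := mul_le_mul_of_nonneg_right hib ht.le
          _ = 1/2 := by field_simp
      rw [lt_div_iff₀ hpos]
      nlinarith
    have hGp : |G ((t+h:ℝ):EReal) - G (t:EReal)| < ε/4 := by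
      have : dist (t+h) t < δ0 := by
        rw [Real.dist_eq, abs_of_nonneg (by linarith)]; linarith
      simpa [Real.dist_eq] using hδprop this
    have hGm : |G ((t-h:ℝ):EReal) - G (t:EReal)| < ε/4 := by
      have : dist (t-h) t < δ0 := by
        rw [Real.dist_eq]
        rw [show t - h - t = -h by ring, abs_neg, abs_of_nonneg hpos.le]; linarith
      simpa [Real.dist_eq] using hδprop this
    have hev : ∀ᶠ n in atTop, dL (Fs n) G < h := by
      have := Metric.tendsto_nhds.1 hd h hpos
      filter_upwards [this] with n hn
      rwa [Real.dist_eq, sub_zero, abs_of_nonneg dL_nonneg] at hn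
    filter_upwards [hev] with n hn
    have hmem := mem_levySet_of_lt (hFs n) hG hn h1b
    have c1 := hmem.2.2.1 (t-h) (by linarith) (by linarith)
    have c2 := hmem.2.2.2 t ht ht1
    rw [show ((t-h)+h : ℝ) = t by ring] at c1
    rw [abs_sub_lt_iff] at hGp hGm
    rw [Real.dist_eq, abs_sub_lt_iff]
    have hm1 : G ((t-h:ℝ):EReal) ≤ Fs n (t:EReal) + h := c1
    have hm2 : Fs n (t:EReal) ≤ G ((t+h:ℝ):EReal) + h := c2
    constructor <;> [nlinarith [hGp.1, hGm.2]; nlinarith [hGp.1, hGm.2]]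

lemma star_uniform {star : TriOp} (htri : IsTriangleFn star) (hc : StarContinuous star)
    {ε : ℝ} (hε : 0 < ε) :
    ∃ δ : ℝ, 0 < δ ∧ ∀ (Dd G : EReal → ℝ), IsDistFun Dd → IsDistFun G →
      (∃ t : ℝ, 0 < t ∧ t < δ ∧ 1 - t < Dd (t:EReal)) → dL (star Dd G) G ≤ ε := by
  by_contra hcon
  push_neg at hcon
  have hsel : ∀ k : ℕ, ∃ (Dd G : EReal → ℝ), IsDistFun Dd ∧ IsDistFun G ∧
      (∃ t : ℝ, 0 < t ∧ t < 1/(k+1) ∧ 1 - t < Dd (t:EReal)) ∧ ε < dL (star Dd G) G := by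
    intro k
    obtain ⟨Dd, G, h1, h2, h3, h4⟩ := hcon (1/(k+1)) (by positivity)
    exact ⟨Dd, G, h1, h2, h3, h4⟩
  choose Dd Gk hDd hGk hT hdL using hsel
  choose tk htk1 htk2 htk3 using hT
  obtain ⟨ψ, Ginf, hψ, hGinf, hwG⟩ := helly Gk hGk
  have hwD : WeakConv (fun j => Dd (ψ j)) H0 := by
    intro s hcontH
    rcases le_or_gt s 0 with hs | hs
    · have h1 : ∀ j, Dd (ψ j) ((s:ℝ):EReal) = 0 :=
        fun j => df_zero (hDd (ψ j)) (EReal.coe_nonpos.2 hs)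
      have h2 : H0 ((s:ℝ):EReal) = 0 := by
        simp only [H0, Hstep]
        rw [if_pos]
        exact EReal.coe_le_coe_iff.2 hs
      simp only [h1, h2]
      exact tendsto_const_nhds
    · have h2 : H0 ((s:ℝ):EReal) = 1 := by
        simp only [H0, Hstep]
        rw [if_neg]
        rw [not_le]
        exact EReal.coe_lt_coe_iff.2 hs
      rw [h2]
      have htk0 : Tendsto (fun j => tk (ψ j)) atTop (𝓝 0) := by
        refine tendsto_of_tendsto_of_tendsto_of_le_of_le tendsto_const_nhds
          (tendsto_one_div_add_atTop_nhds_zero_nat.comp hψ.tendsto_atTop)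
          (fun j => (htk1 (ψ j)).le) (fun j => (htk2 (ψ j)).le)
      have hlow : Tendsto (fun j => 1 - tk (ψ j)) atTop (𝓝 1) := by
        have := htk0.const_sub 1
        simpa using this
      refine tendsto_of_tendsto_of_tendsto_of_le_of_le' hlow tendsto_const_nhds ?_
        (Eventually.of_forall fun j => df_le_one (hDd (ψ j)) _)
      filter_upwards [htk0.eventually_lt_const hs] with j hj
      have h3 := htk3 (ψ j)
      have hmono := (hDd (ψ j)).1 (EReal.coe_le_coe_iff.2 hj.le)
      linarith
  have hstar : ∀ j, IsDistFun (star (Dd (ψ j)) (Gk (ψ j))) :=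
    fun j => htri.1 _ _ (hDd _) (hGk _)
  have hwS : WeakConv (fun j => star (Dd (ψ j)) (Gk (ψ j))) (star H0 Ginf) :=
    hc _ _ _ _ (fun j => hDd _) (fun j => hGk _) isDistFun_H0 hGinf hwD hwG
  have hid : star H0 Ginf = Ginf := by
    rw [htri.2.1 H0 Ginf isDistFun_H0 hGinf, htri.2.2.2.1 Ginf hGinf]
  rw [hid] at hwS
  have t1 := weakConv_dL_tendsto hstar hGinf hwS
  have t2 := weakConv_dL_tendsto (fun j => hGk (ψ j)) hGinf hwG
  have hsum : Tendsto (fun j => dL (star (Dd (ψ j)) (Gk (ψ j))) Ginf + dL (Gk (ψ j)) Ginf)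
      atTop (𝓝 0) := by simpa using t1.add t2
  obtain ⟨j, hj⟩ := ((Metric.tendsto_nhds.1 hsum) ε hε).exists
  rw [Real.dist_eq, sub_zero] at hj
  have hj' : dL (star (Dd (ψ j)) (Gk (ψ j))) Ginf + dL (Gk (ψ j)) Ginf < ε :=
    lt_of_le_of_lt (le_abs_self _) hj
  have htri2 : dL (star (Dd (ψ j)) (Gk (ψ j))) (Gk (ψ j)) ≤
      dL (star (Dd (ψ j)) (Gk (ψ j))) Ginf + dL Ginf (Gk (ψ j)) :=
    dL_triangle (hstar j) (hGk (ψ j)) hGinf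
  rw [dL_symm (F := Ginf)] at htri2
  have := hdL (ψ j)
  linarith

lemma dL_le_of_twosided {star : TriOp} {Dd F G : EReal → ℝ}
    (hS1 : IsDistFun (star Dd G)) (hS2 : IsDistFun (star Dd F))
    (hF : IsDistFun F) (hG : IsDistFun G) {ε : ℝ} (hε : 0 ≤ ε)
    (h1 : star Dd G ≤ F) (h2 : star Dd F ≤ G)
    (hd1 : dL (star Dd G) G ≤ ε) (hd2 : dL (star Dd F) F ≤ ε) : dL F G ≤ ε := by
  refine dL_le_of_forall_mem hF hG hε ?_
  intro ε' hlt hle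
  have m1 := mem_levySet_of_lt hS1 hG (lt_of_le_of_lt hd1 hlt) hle
  have m2 := mem_levySet_of_lt hS2 hF (lt_of_le_of_lt hd2 hlt) hle
  refine ⟨lt_of_le_of_lt hε hlt, hle, ?_, ?_⟩
  · intro t ht htε
    have ha := h1 ((t+ε':ℝ):EReal)
    have hb := m1.2.2.1 t ht htε
    linarith
  · intro t ht htε
    have ha := h2 ((t+ε':ℝ):EReal)
    have hb := m2.2.2.1 t ht htε
    linarith

end Aux3
section Aux4

lemma exists_real_btwn_ereal {l : EReal} {x : ℝ} (h : l < (x:EReal)) :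
    ∃ c : ℝ, l < (c:EReal) ∧ c < x := by
  induction l using EReal.rec with
  | bot => exact ⟨x - 1, by exact_mod_cast EReal.bot_lt_coe (x-1), by linarith⟩
  | coe l' =>
    have hl : l' < x := EReal.coe_lt_coe_iff.1 h
    exact ⟨(l' + x)/2, EReal.coe_lt_coe_iff.2 (by linarith), by linarith⟩
  | top => exact absurd h (not_lt.2 le_top)

lemma exists_continuousAt₂_btwn {F G : EReal → ℝ} (hF : Monotone F) (hG : Monotone G)
    {a b : ℝ} (hab : a < b) :
    ∃ c : ℝ, a < c ∧ c < b ∧ ContinuousAt F ((c:ℝ):EReal) ∧ ContinuousAt G ((c:ℝ):EReal) := by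
  have hcnt : ({x : EReal | ¬ContinuousAt F x} ∪ {x : EReal | ¬ContinuousAt G x}).Countable :=
    (hF.countable_not_continuousAt).union (hG.countable_not_continuousAt)
  have h2 : {x : ℝ | ¬ContinuousAt F ((x:ℝ):EReal) ∨ ¬ContinuousAt G ((x:ℝ):EReal)}.Countable := by
    have hp := hcnt.preimage (f := ((↑) : ℝ → EReal)) EReal.coe_injective
    refine Set.Countable.mono ?_ hp
    intro y hy
    simp only [Set.mem_setOf_eq] at hy
    simp only [Set.mem_preimage, Set.mem_union, Set.mem_setOf_eq]
    exact hy
  by_contra h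
  push_neg at h
  have hsub : Set.Ioo a b ⊆
      {x : ℝ | ¬ContinuousAt F ((x:ℝ):EReal) ∨ ¬ContinuousAt G ((x:ℝ):EReal)} := by
    intro c hc
    simp only [Set.mem_setOf_eq]
    by_contra hcc
    push_neg at hcc
    exact h c hc.1 hc.2 hcc.1 hcc.2
  have hcnt2 : (Set.Ioo a b).Countable := h2.mono hsub
  have hz := hcnt2.measure_zero MeasureTheory.volume
  rw [Real.volume_Ioo, ENNReal.ofReal_eq_zero] at hz
  linarith

lemma df_le_of_le_contPoints {R S : EReal → ℝ} (hR : IsDistFun R) (hS : IsDistFun S)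
    (h : ∀ t : ℝ, ContinuousAt R (t:EReal) → ContinuousAt S (t:EReal) → R (t:EReal) ≤ S (t:EReal)) :
    R ≤ S := by
  intro t
  induction t using EReal.rec with
  | bot => rw [hR.2.2.2.1, hS.2.2.2.1]
  | top => rw [hR.2.2.2.2.1, hS.2.2.2.2.1]
  | coe x =>
    refine le_of_forall_pos_le_add ?_
    intro ε hε
    have hlc := hR.2.2.1 x
    unfold ContinuousWithinAt at hlc
    have hmem : {y : EReal | R x - ε < R y} ∈ 𝓝[<] (x:EReal) := by
      refine hlc (Ioi_mem_nhds ?_)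
      linarith
    obtain ⟨l, hl, hsub⟩ := (mem_nhdsLT_iff_exists_Ioo_subset'
      (show (⊥:EReal) < (x:EReal) from EReal.bot_lt_coe x)).1 hmem
    obtain ⟨c, hc1, hc2⟩ := exists_real_btwn_ereal (show l < (x:EReal) from hl)
    obtain ⟨s, hs1, hs2, hsR, hsS⟩ := exists_continuousAt₂_btwn hR.1 hS.1 hc2
    have hmemIoo : (s:EReal) ∈ Set.Ioo l (x:EReal) :=
      ⟨lt_trans hc1 (EReal.coe_lt_coe_iff.2 hs1), EReal.coe_lt_coe_iff.2 hs2⟩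
    have h1 : R x - ε < R (s:EReal) := hsub hmemIoo
    have h2 : R (s:EReal) ≤ S (s:EReal) := h s hsR hsS
    have h3 : S (s:EReal) ≤ S (x:EReal) := hS.1 (EReal.coe_le_coe_iff.2 hs2.le)
    linarith

end Aux4

/-- Arzela-Ascoli, direct implication: if `(K,D,⋆)` is compact then `Lip¹_⋆(K,Δ⁺)` is
compact for `d_∞`: every sequence of probabilistic 1-Lipschitz maps has a subsequence
converging uniformly to a probabilistic 1-Lipschitz map. -/
theorem stmt17 {K : Type} (M : PMSpace K) (hc : StarContinuous M.star)
    (hsup : StarSupContinuous M.star) (hcomp : PCompact M)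
    (f : ℕ → K → EReal → ℝ) (hf : ∀ n, PLip M (f n)) :
    ∃ (φ : ℕ → ℕ) (g : K → EReal → ℝ), StrictMono φ ∧ PLip M g ∧
      Tendsto (fun n => dInf (f (φ n)) g) atTop (𝓝 0) := by
  obtain ⟨hcompl, hnet⟩ := hcomp
  rcases isEmpty_or_nonempty K with hK | hK
  · refine ⟨id, fun _ => H0, strictMono_id,
      ⟨fun _ => isDistFun_H0, fun x _ => hK.elim x⟩, ?_⟩
    have hz : ∀ n : ℕ, dInf (f (id n)) (fun _ : K => H0) = 0 := by
      intro n
      simp only [dInf]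
      exact Real.iSup_of_isEmpty _
    simp only [id] at hz
    simp only [hz]
    exact tendsto_const_nhds
  have hApos : ∀ m : ℕ, (0:ℝ) < 1/(m+1) := fun m => by positivity
  choose A hA using fun m : ℕ => hnet (1/(m+1)) (hApos m)
  set T : Set K := ⋃ m, (A m : Set K) with hT
  have hTc : T.Countable := Set.countable_iUnion (fun m => (A m).countable_toSet)
  have hTne : T.Nonempty := by
    obtain ⟨x0⟩ := hK
    obtain ⟨a, ha, -⟩ := hA 0 x0
    exact ⟨a, Set.mem_iUnion.2 ⟨0, ha⟩⟩
  obtain ⟨e, hTe⟩ := hTc.exists_eq_range hTne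
  obtain ⟨φ, L, hφ, hLdf, hwL⟩ := helly_family (ι := ℕ) (fun n i => f n (e i))
    (fun n i => (hf n).1 (e i))
  have key1 : ∀ ε : ℝ, 0 < ε → ∃ δ : ℝ, 0 < δ ∧ ∀ (n : ℕ) (x y : K),
      (∃ t : ℝ, 0 < t ∧ t < δ ∧ 1 - t < M.D x y (t:EReal)) → dL (f n x) (f n y) ≤ ε := by
    intro ε hε
    obtain ⟨δ, hδ, hδprop⟩ := star_uniform M.star_tri hc hε
    refine ⟨δ, hδ, ?_⟩
    intro n x y hw
    have s1 : M.star (M.D x y) (f n y) ≤ f n x := (hf n).2 x y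
    have s2 : M.star (M.D x y) (f n x) ≤ f n y := by
      have := (hf n).2 y x
      rwa [M.D_symm y x] at this
    have d1 := hδprop (M.D x y) (f n y) (M.D_mem x y) ((hf n).1 y) hw
    have d2 := hδprop (M.D x y) (f n x) (M.D_mem x y) ((hf n).1 x) hw
    exact dL_le_of_twosided (M.star_tri.1 _ _ (M.D_mem x y) ((hf n).1 y))
      (M.star_tri.1 _ _ (M.D_mem x y) ((hf n).1 x)) ((hf n).1 x) ((hf n).1 y)
      hε.le s1 s2 d1 d2
  have hgex : ∀ x : K, ∃ g0 : EReal → ℝ, IsDistFun g0 ∧ ∃ ψ : ℕ → ℕ, StrictMono ψ ∧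
      WeakConv (fun j => f (φ (ψ j)) x) g0 := by
    intro x
    obtain ⟨ψ, g0, hψ, h1, h2⟩ := helly (fun n => f (φ n) x) (fun n => (hf (φ n)).1 x)
    exact ⟨g0, h1, ψ, hψ, h2⟩
  choose g hgdf ψ hψmono hψconv using hgex
  have hrange : ∀ a : K, a ∈ T → ∃ i : ℕ, e i = a := by
    intro a ha
    rw [hTe] at ha
    exact Set.mem_range.1 ha
  choose idx hidx using hrange
  have main : ∀ ε : ℝ, 0 < ε → ∃ N : ℕ, ∀ n ≥ N, ∀ x : K,
      dL (f (φ n) x) (g x) ≤ 5*ε := by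
    intro ε hε
    obtain ⟨δ, hδ, hδ1⟩ := key1 ε hε
    obtain ⟨m, hm⟩ := exists_nat_one_div_lt hδ
    have hev : ∀ᶠ n in atTop, ∀ a ∈ A m, ∀ (ha : a ∈ T),
        dL (f (φ n) a) (L (idx a ha)) ≤ ε := by
      rw [eventually_all_finset]
      intro a haA
      have haT : a ∈ T := Set.mem_iUnion.2 ⟨m, haA⟩
      have ht := weakConv_dL_tendsto (fun n => (hf (φ n)).1 (e (idx a haT)))
        (hLdf (idx a haT)) (hwL (idx a haT))
      rw [hidx a haT] at ht
      have hev2 := (Metric.tendsto_nhds.1 ht) ε hε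
      filter_upwards [hev2] with n hn ha
      rw [Real.dist_eq, sub_zero, abs_of_nonneg dL_nonneg] at hn
      exact hn.le
    obtain ⟨N, hN⟩ := eventually_atTop.1 hev
    refine ⟨N, ?_⟩
    intro n hn x
    obtain ⟨a, haA, haD⟩ := hA m x
    have haT : a ∈ T := Set.mem_iUnion.2 ⟨m, haA⟩
    have hwit : ∃ t : ℝ, 0 < t ∧ t < δ ∧ 1 - t < M.D x a (t:EReal) := by
      refine ⟨1/(m+1), hApos m, hm, ?_⟩
      rw [M.D_symm x a]
      exact haD
    have c1 : dL (f (φ n) x) (f (φ n) a) ≤ ε := hδ1 (φ n) x a hwit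
    have c2 : dL (f (φ n) a) (L (idx a haT)) ≤ ε := hN n hn a haA haT
    have ht3 := weakConv_dL_tendsto (fun j => (hf (φ (ψ x j))).1 x) (hgdf x) (hψconv x)
    have hev3 : ∀ᶠ j in atTop, dL (f (φ (ψ x j)) x) (g x) < ε := by
      have := (Metric.tendsto_nhds.1 ht3) ε hε
      filter_upwards [this] with j hj
      rwa [Real.dist_eq, sub_zero, abs_of_nonneg dL_nonneg] at hj
    obtain ⟨j, hjlt, hjge⟩ := (hev3.and (eventually_ge_atTop N)).exists
    have hψge : N ≤ ψ x j := le_trans hjge ((hψmono x).le_apply)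
    have c3 : dL (f (φ (ψ x j)) x) (f (φ (ψ x j)) a) ≤ ε := hδ1 (φ (ψ x j)) x a hwit
    have c4 : dL (f (φ (ψ x j)) a) (L (idx a haT)) ≤ ε := hN (ψ x j) hψge a haA haT
    have df1 : IsDistFun (f (φ n) x) := (hf (φ n)).1 x
    have df2 : IsDistFun (f (φ n) a) := (hf (φ n)).1 a
    have df3 : IsDistFun (L (idx a haT)) := hLdf _
    have df4 : IsDistFun (f (φ (ψ x j)) x) := (hf (φ (ψ x j))).1 x
    have df5 : IsDistFun (f (φ (ψ x j)) a) := (hf (φ (ψ x j))).1 a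
    have dfg : IsDistFun (g x) := hgdf x
    have t1 : dL (f (φ n) x) (L (idx a haT)) ≤ 2*ε := by
      have := dL_triangle df1 df3 df2
      linarith
    have t2 : dL (f (φ (ψ x j)) x) (L (idx a haT)) ≤ 2*ε := by
      have := dL_triangle df4 df3 df5
      linarith
    have u1 := dL_triangle df1 dfg df3
    have u2 := dL_triangle df3 dfg df4
    rw [dL_symm (F := L (idx a haT)) (G := f (φ (ψ x j)) x)] at u2
    linarith
  have hconv0 : Tendsto (fun n => dInf (f (φ n)) g) atTop (𝓝 0) := by
    rw [Metric.tendsto_atTop]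
    intro ε hε
    obtain ⟨N, hN⟩ := main (ε/6) (by linarith)
    refine ⟨N, ?_⟩
    intro n hn
    have hub : dInf (f (φ n)) g ≤ 5*(ε/6) := ciSup_le (hN n hn)
    have hlb : 0 ≤ dInf (f (φ n)) g := by
      obtain ⟨x0⟩ := hK
      have hbdd : BddAbove (Set.range (fun x => dL (f (φ n) x) (g x))) := by
        refine ⟨1, ?_⟩
        rintro y ⟨x, rfl⟩
        exact dL_le_one ((hf (φ n)).1 x) (hgdf x)
      exact le_trans dL_nonneg (le_ciSup hbdd x0)
    rw [Real.dist_eq, sub_zero, abs_of_nonneg hlb]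
    linarith
  have hdLx : ∀ x, Tendsto (fun n => dL (f (φ n) x) (g x)) atTop (𝓝 0) := by
    intro x
    rw [Metric.tendsto_nhds]
    intro ε hε
    obtain ⟨N, hN⟩ := main (ε/6) (by linarith)
    filter_upwards [eventually_ge_atTop N] with n hn
    rw [Real.dist_eq, sub_zero, abs_of_nonneg dL_nonneg]
    calc dL (f (φ n) x) (g x) ≤ 5*(ε/6) := hN n hn x
      _ < ε := by linarith
  have hwx : ∀ x, WeakConv (fun n => f (φ n) x) (g x) := fun x =>
    dL_tendsto_weakConv (fun n => (hf (φ n)).1 x) (hgdf x) (hdLx x)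
  have hplip : PLip M g := by
    refine ⟨hgdf, ?_⟩
    intro x y
    have hwR : WeakConv (fun n => M.star (M.D x y) (f (φ n) y)) (M.star (M.D x y) (g y)) :=
      hc (fun _ => M.D x y) (fun n => f (φ n) y) (M.D x y) (g y)
        (fun _ => M.D_mem x y) (fun n => (hf (φ n)).1 y) (M.D_mem x y) (hgdf y)
        (fun t _ => tendsto_const_nhds) (hwx y)
    refine df_le_of_le_contPoints (M.star_tri.1 _ _ (M.D_mem x y) (hgdf y)) (hgdf x) ?_
    intro t hc1 hc2
    refine le_of_tendsto_of_tendsto' (hwR t hc1) (hwx x t hc2) ?_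
    intro n
    exact (hf (φ n)).2 x y ((t:ℝ):EReal)
  exact ⟨φ, g, hφ, hplip, hconv0⟩
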